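/- arXiv:0803.1610 — 2 statements merged into one kernel-verified Lean document; each statement's English description precedes it below -/
import Mathlib

section
/- Let E_1, ..., E_n be i.i.d. exponential random variables with parameter 1. Then the sum T_n = E_1/1 + E_2/2 + ... + E_n/n has the same distribution as max(E_1, ..., E_n). -/
open MeasureTheory ProbabilityTheory Finset Real

namespace Stmt0Aux

/-- The candidate CDF value, as `ℝ≥0∞`. -/
noncomputable def Fe (n : ℕ) (t : ℝ) : ENNReal :=
  ENNReal.ofReal (if 0 ≤ t then (1 - rexp (-t))^n else 0)

lemma Fe_measurable (n : ℕ) : Measurable (Fe n) := by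
  unfold Fe
  apply Measurable.ennreal_ofReal
  exact Measurable.ite measurableSet_Ici (by fun_prop) measurable_const

lemma hasDeriv_H (n : ℕ) (t x : ℝ) :
    HasDerivAt (fun x => -(rexp (-x) * (1 - rexp (x/(n+1) - t))^(n+1)))
      (rexp (-x) * (1 - rexp (x/(n+1) - t))^n) x := by
  have hc : ((n:ℝ) + 1) ≠ 0 := by positivity
  have h1 : HasDerivAt (fun x : ℝ => rexp (-x)) (-rexp (-x)) x := by
    simpa using ((hasDerivAt_id x).neg).exp
  have h2 : HasDerivAt (fun x : ℝ => x/(n+1) - t) (1/(n+1)) x := by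
    simpa using ((hasDerivAt_id x).div_const ((n:ℝ)+1)).sub_const t
  have h3 : HasDerivAt (fun x : ℝ => 1 - rexp (x/(n+1) - t))
      (-(rexp (x/(n+1) - t) * (1/(n+1)))) x := by
    simpa using (h2.exp.const_sub 1)
  have h5 := h1.mul (h3.pow (n+1))
  have := h5.neg
  refine this.congr_deriv ?_
  push_cast
  simp only [Pi.pow_apply]
  field_simp
  ring

lemma real_int (n : ℕ) (t : ℝ) :
    ∫ x in (0:ℝ)..(((n:ℝ)+1)*t), rexp (-x) * (1 - rexp (x/(n+1) - t))^n
      = (1 - rexp (-t))^(n+1) := by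
  have hc : ((n:ℝ) + 1) ≠ 0 := by positivity
  rw [intervalIntegral.integral_eq_sub_of_hasDerivAt
    (f := fun x => -(rexp (-x) * (1 - rexp (x/(n+1) - t))^(n+1)))
    (fun x _ => hasDeriv_H n t x)
    (Continuous.intervalIntegrable (by fun_prop) _ _)]
  rw [mul_div_cancel_left₀ t hc]
  simp [sub_self, zero_pow (Nat.succ_ne_zero n)]

lemma key_lintegral (n : ℕ) (t : ℝ) :
    ∫⁻ x, exponentialPDF 1 x * Fe n (t - x/((n:ℝ)+1)) = Fe (n+1) t := by
  have hc : (0:ℝ) < (n:ℝ) + 1 := by positivity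
  rcases lt_or_ge t 0 with ht | ht
  · have hz : ∀ x : ℝ, exponentialPDF 1 x * Fe n (t - x/((n:ℝ)+1)) = 0 := by
      intro x
      rcases lt_or_ge x 0 with hx | hx
      · rw [exponentialPDF_of_neg hx, zero_mul]
      · have : t - x/((n:ℝ)+1) < 0 := by
          have : 0 ≤ x/((n:ℝ)+1) := div_nonneg hx hc.le
          linarith
        rw [show Fe n (t - x/((n:ℝ)+1)) = 0 by
          simp only [Fe, if_neg (not_le.2 this), ENNReal.ofReal_zero], mul_zero]
    rw [lintegral_congr hz, lintegral_zero]
    simp only [Fe, if_neg (not_le.2 ht), ENNReal.ofReal_zero]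
  · set b : ℝ := ((n:ℝ)+1) * t with hb
    have hb0 : 0 ≤ b := by positivity
    have hmeas : Measurable (fun x => exponentialPDF 1 x * Fe n (t - x/((n:ℝ)+1))) := by
      apply Measurable.fun_mul
      · exact (measurable_exponentialPDFReal 1).ennreal_ofReal
      · exact (Fe_measurable n).comp (by fun_prop)
    rw [← lintegral_add_compl _ (measurableSet_Icc (a := (0:ℝ)) (b := b))]
    have h2 : ∫⁻ x in (Set.Icc (0:ℝ) b)ᶜ, exponentialPDF 1 x * Fe n (t - x/((n:ℝ)+1)) = 0 := by
      rw [setLIntegral_congr_fun (measurableSet_Icc.compl) ?_, lintegral_zero]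
      intro x hx
      dsimp only
      rw [Set.mem_compl_iff, Set.mem_Icc, not_and_or, not_le, not_le] at hx
      rcases hx with hx | hx
      · rw [exponentialPDF_of_neg hx, zero_mul]
      · have : t - x/((n:ℝ)+1) < 0 := by
          rw [sub_neg, lt_div_iff₀ hc]
          linarith [hx]
        rw [show Fe n (t - x/((n:ℝ)+1)) = 0 by
          simp only [Fe, if_neg (not_le.2 this), ENNReal.ofReal_zero], mul_zero]
    rw [h2, add_zero]
    have h3 : ∫⁻ x in Set.Icc (0:ℝ) b, exponentialPDF 1 x * Fe n (t - x/((n:ℝ)+1))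
        = ∫⁻ x in Set.Icc (0:ℝ) b,
            ENNReal.ofReal (rexp (-x) * (1 - rexp (x/((n:ℝ)+1) - t))^n) := by
      apply setLIntegral_congr_fun measurableSet_Icc ?_
      intro x hx
      dsimp only
      rw [Set.mem_Icc] at hx
      have hxt : 0 ≤ t - x/((n:ℝ)+1) := by
        rw [sub_nonneg, div_le_iff₀ hc]
        linarith [hx.2]
      rw [exponentialPDF_of_nonneg hx.1, Fe, if_pos hxt,
        ← ENNReal.ofReal_mul (by positivity)]
      congr 2
      · ring_nf
      · congr 2
        ring_nf
    rw [h3, ← MeasureTheory.ofReal_integral_eq_lintegral_ofReal]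
    · rw [MeasureTheory.integral_Icc_eq_integral_Ioc,
        ← intervalIntegral.integral_of_le hb0, real_int n t, Fe, if_pos ht]
    · exact (Continuous.integrableOn_Icc (by fun_prop))
    · refine (ae_restrict_iff' measurableSet_Icc).2 (ae_of_all _ fun x hx => ?_)
      rw [Set.mem_Icc] at hx
      have h1 : x/((n:ℝ)+1) - t ≤ 0 := by
        rw [sub_nonpos, div_le_iff₀ hc]; linarith [hx.2]
      have h2 : rexp (x/((n:ℝ)+1) - t) ≤ 1 := Real.exp_le_one_iff.2 h1
      exact mul_nonneg (Real.exp_pos _).le (pow_nonneg (by linarith) n)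

lemma expMeasure_Iic (t : ℝ) :
    expMeasure 1 (Set.Iic t) = ENNReal.ofReal (if 0 ≤ t then 1 - rexp (-t) else 0) := by
  rw [expMeasure, gammaMeasure, withDensity_apply _ measurableSet_Iic]
  have h := lintegral_exponentialPDF_eq_antiDeriv one_pos t
  simp only [one_mul] at h
  exact h

lemma expMeasure_lintegral (G : ℝ → ENNReal) (hG : Measurable G) :
    ∫⁻ x, G x ∂(expMeasure 1) = ∫⁻ x, exponentialPDF 1 x * G x := by
  have hpdf : Measurable (gammaPDF 1 1) := (measurable_gammaPDFReal 1 1).ennreal_ofReal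
  rw [expMeasure, gammaMeasure, lintegral_withDensity_eq_lintegral_mul _ hpdf hG]
  rfl

end Stmt0Aux

open Stmt0Aux

/-- If `E 0, ..., E (n-1)` are i.i.d. exponential random variables with rate 1, then
`T_n = ∑_{k=1}^n E_k / k` has the same distribution as `max(E_1, ..., E_n)`. -/
theorem stmt0 {Ω : Type*} [MeasurableSpace Ω] (P : Measure Ω) [IsProbabilityMeasure P]
    (E : ℕ → Ω → ℝ) (hmeas : ∀ k, Measurable (E k))
    (hindep : iIndepFun E P)
    (hdist : ∀ k, Measure.map (E k) P = expMeasure 1)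
    (n : ℕ) (hn : 1 ≤ n) :
    Measure.map (fun ω => ∑ k ∈ Finset.range n, E k ω / (k + 1)) P =
      Measure.map
        (fun ω => (Finset.range n).sup' (Finset.nonempty_range_iff.2 (by omega))
          (fun k => E k ω)) P := by
  classical
  have hne : (Finset.range n).Nonempty := Finset.nonempty_range_iff.2 (by omega)
  have hEk_cdf : ∀ (k : ℕ) (t : ℝ),
      P (E k ⁻¹' Set.Iic t) = ENNReal.ofReal (if 0 ≤ t then 1 - rexp (-t) else 0) := by
    intro k t
    rw [← Measure.map_apply (hmeas k) measurableSet_Iic, hdist k, expMeasure_Iic]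
  -- CDF of the sum
  set g : ℕ → Ω → ℝ := fun k ω => E k ω / ((k:ℝ) + 1) with hgdef
  have hgmeas : ∀ k, Measurable (g k) := fun k => (hmeas k).div_const _
  have hgind : iIndepFun g P :=
    hindep.comp (fun k x => x / ((k:ℝ)+1)) (fun k => measurable_id.div_const _)
  have hsum : ∀ (m : ℕ) (t : ℝ),
      P {ω | ∑ k ∈ Finset.range m, g k ω ≤ t} = Fe m t := by
    intro m
    induction m with
    | zero =>
      intro t
      rcases le_or_gt 0 t with h | h
      · simp only [Finset.range_zero, Finset.sum_empty, Fe, if_pos h, pow_zero,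
          ENNReal.ofReal_one]
        rw [show {ω : Ω | (0:ℝ) ≤ t} = Set.univ from Set.eq_univ_of_forall fun ω => h]
        exact measure_univ
      · simp only [Finset.range_zero, Finset.sum_empty, Fe, if_neg (not_le.2 h),
          ENNReal.ofReal_zero]
        rw [show {ω : Ω | (0:ℝ) ≤ t} = ∅ from Set.eq_empty_of_forall_notMem
          fun ω hω => absurd hω (not_le.2 h)]
        exact measure_empty
    | succ m ih =>
      intro t
      have hXmeas : Measurable (fun ω => ∑ k ∈ Finset.range m, g k ω) :=
        Finset.measurable_sum _ fun k _ => hgmeas k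
      have hYmeas : Measurable (g m) := hgmeas m
      have hXY : IndepFun (fun ω => ∑ k ∈ Finset.range m, g k ω) (g m) P := by
        have h := hgind.indepFun_sum_range_succ hgmeas m
        have heq : (∑ j ∈ Finset.range m, g j) = fun ω => ∑ k ∈ Finset.range m, g k ω := by
          funext ω; simp [Finset.sum_apply]
        rwa [heq] at h
      have hmap := (indepFun_iff_map_prod_eq_prod_map_map hYmeas.aemeasurable
        hXmeas.aemeasurable).1 hXY.symm
      have hsetmeas : MeasurableSet {p : ℝ × ℝ | p.2 + p.1 ≤ t} :=
        measurableSet_le (measurable_snd.add measurable_fst) measurable_const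
      have hset : {ω : Ω | ∑ k ∈ Finset.range (m+1), g k ω ≤ t}
          = (fun ω => (g m ω, ∑ k ∈ Finset.range m, g k ω)) ⁻¹' {p : ℝ×ℝ | p.2 + p.1 ≤ t} := by
        ext ω
        simp [Finset.sum_range_succ]
      rw [hset, ← Measure.map_apply (hYmeas.prodMk hXmeas) hsetmeas, hmap,
        Measure.prod_apply hsetmeas]
      have hpre : ∀ y : ℝ, (Prod.mk y ⁻¹' {p : ℝ×ℝ | p.2 + p.1 ≤ t}) = Set.Iic (t - y) := by
        intro y
        ext x
        simp only [Set.mem_preimage, Set.mem_setOf_eq, Set.mem_Iic]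
        constructor <;> intro h <;> linarith
      have hstep1 : ∫⁻ y, (Measure.map (fun ω => ∑ k ∈ Finset.range m, g k ω) P)
            (Prod.mk y ⁻¹' {p : ℝ×ℝ | p.2 + p.1 ≤ t}) ∂(Measure.map (g m) P)
          = ∫⁻ y, Fe m (t - y) ∂(Measure.map (g m) P) := by
        apply lintegral_congr
        intro y
        rw [hpre y, Measure.map_apply hXmeas measurableSet_Iic]
        exact ih (t - y)
      rw [hstep1]
      have hFm : Measurable (fun y : ℝ => Fe m (t - y)) :=
        (Fe_measurable m).comp (by fun_prop)
      rw [lintegral_map hFm hYmeas]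
      have hf2 : Measurable (fun x : ℝ => Fe m (t - x / ((m:ℝ)+1))) :=
        (Fe_measurable m).comp (by fun_prop)
      have hstep2 : ∫⁻ ω, Fe m (t - g m ω) ∂P
          = ∫⁻ x, Fe m (t - x / ((m:ℝ)+1)) ∂(Measure.map (E m) P) := by
        rw [lintegral_map hf2 (hmeas m)]
      rw [hstep2, hdist m, expMeasure_lintegral _ hf2, key_lintegral m t]
  -- CDF of the max
  have hmax : ∀ t : ℝ,
      P {ω | (Finset.range n).sup' hne (fun k => E k ω) ≤ t} = Fe n t := by
    intro t
    have hset : {ω : Ω | (Finset.range n).sup' hne (fun k => E k ω) ≤ t}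
        = ⋂ k ∈ Finset.range n, E k ⁻¹' Set.Iic t := by
      ext ω
      simp [Finset.sup'_le_iff]
    rw [hset, hindep.meas_biInter (fun k _ => ⟨Set.Iic t, measurableSet_Iic, rfl⟩)]
    rw [Finset.prod_congr rfl (fun k _ => hEk_cdf k t), Finset.prod_const, Finset.card_range]
    rcases le_or_gt 0 t with h | h
    · rw [if_pos h, ← ENNReal.ofReal_pow (sub_nonneg.2 (Real.exp_le_one_iff.2 (by linarith)))]
      simp only [Fe, if_pos h]
    · rw [if_neg (not_le.2 h), ENNReal.ofReal_zero, zero_pow (by omega)]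
      simp only [Fe, if_neg (not_le.2 h), ENNReal.ofReal_zero]
  -- conclude
  have hXn : Measurable (fun ω => ∑ k ∈ Finset.range n, E k ω / ((k:ℝ) + 1)) :=
    Finset.measurable_sum _ fun k _ => (hmeas k).div_const _
  have hMn : Measurable (fun ω => (Finset.range n).sup' hne fun k => E k ω) := by
    have h := Finset.measurable_sup' hne (f := fun k => E k) (fun k _ => hmeas k)
    have heq : ((Finset.range n).sup' hne fun k => E k)
        = fun ω => (Finset.range n).sup' hne fun k => E k ω := by
      funext ω; simp [Finset.sup'_apply]
    rwa [heq] at h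
  haveI : IsProbabilityMeasure
      (Measure.map (fun ω => ∑ k ∈ Finset.range n, E k ω / ((k:ℝ) + 1)) P) :=
    Measure.isProbabilityMeasure_map hXn.aemeasurable
  refine Measure.ext_of_Iic _ _ fun t => ?_
  rw [Measure.map_apply hXn measurableSet_Iic, Measure.map_apply hMn measurableSet_Iic]
  exact (hsum n t).trans (hmax t).symm
end

section
/- Let \delta > 1, \alpha > 0, and q(u) = \alpha u^{-\delta} for u \ge 1. Then for N \to \infty and k(N) \sim A (N/\log N)^{1/\delta} with A > 0, \int_1^{k(N)} e^{-N q(u)} du \sim \frac{1}{\alpha\delta} \frac{k(N)^{1+\delta}}{N} exp(-\alpha N k(N)^{-\delta}). -/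
open Filter Real

-- derivative of F u = u^(1+δ)/(n*α*δ) * exp (-n*α*u^(-δ))
lemma aux_deriv (α δ n : ℝ) (hα : 0 < α) (hδ : 1 < δ) (hn : 0 < n)
    (u : ℝ) (hu : 0 < u) :
    HasDerivAt (fun u : ℝ => u ^ (1+δ) / (n*α*δ) * Real.exp (-n*α*u^(-δ)))
      (Real.exp (-n*(α*u^(-δ))) * (1 + (1+δ)*u^δ/(n*α*δ))) u := by
  have hu0 : u ≠ 0 := ne_of_gt hu
  have h1 : HasDerivAt (fun u : ℝ => u ^ (1+δ)) ((1+δ) * u ^ ((1+δ)-1)) u :=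
    Real.hasDerivAt_rpow_const (Or.inl hu0)
  have h2 : HasDerivAt (fun u : ℝ => u ^ (-δ)) ((-δ) * u ^ (-δ-1)) u :=
    Real.hasDerivAt_rpow_const (Or.inl hu0)
  have h3 : HasDerivAt (fun u : ℝ => Real.exp (-n*α*u^(-δ)))
      (Real.exp (-n*α*u^(-δ)) * ((-n*α) * ((-δ) * u ^ (-δ-1)))) u := by
    have := (h2.const_mul (-n*α)).exp
    simpa [mul_comm] using this
  have h4 := (h1.div_const (n*α*δ)).mul h3
  refine h4.congr_deriv ?_
  symm
  have key : u ^ (1+δ) * u ^ (-δ-1) = 1 := by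
    rw [← Real.rpow_add hu, show (1+δ)+(-δ-1) = 0 by ring, Real.rpow_zero]
  have e1 : (1+δ)-1 = δ := by ring
  have e2 : -n*(α*u^(-δ)) = -n*α*u^(-δ) := by ring
  rw [e1, e2]
  have hC : n*α*δ ≠ 0 := by positivity
  field_simp
  linear_combination (-(n*α*δ)) * key

lemma aux_cont (α δ n c : ℝ) (b : ℝ) :
    ContinuousOn (fun u : ℝ => Real.exp (-n*(α*u^(-δ))) * (1 + c*u^δ/(n*α*δ)))
      (Set.uIcc 1 b) → True := fun _ => trivial

lemma aux_contOn (α δ n c d : ℝ) (s : Set ℝ) (hs : ∀ x ∈ s, x ≠ 0) :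
    ContinuousOn (fun u : ℝ => Real.exp (-n*(α*u^(-δ))) * (d + c*u^δ/(n*α*δ))) s := by
  have h1 : ContinuousOn (fun u : ℝ => u ^ (-δ)) s :=
    ContinuousOn.rpow_const continuousOn_id (fun x hx => Or.inl (hs x hx))
  have h2 : ContinuousOn (fun u : ℝ => u ^ δ) s :=
    ContinuousOn.rpow_const continuousOn_id (fun x hx => Or.inl (hs x hx))
  exact ((Real.continuous_exp.comp_continuousOn
    (continuousOn_const.mul (continuousOn_const.mul h1))).mul
    (continuousOn_const.add ((continuousOn_const.mul h2).div_const _)))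

lemma aux_bounds (α δ n b : ℝ) (hα : 0 < α) (hδ : 1 < δ) (hn : 0 < n) (hb : 1 ≤ b) :
    (∫ u in (1:ℝ)..b, Real.exp (-n*(α*u^(-δ)))) ≤ b ^ (1+δ)/(n*α*δ) * Real.exp (-n*α*b^(-δ))
    ∧ b ^ (1+δ)/(n*α*δ) * Real.exp (-n*α*b^(-δ)) - 1/(n*α*δ) * Real.exp (-n*α)
        ≤ (∫ u in (1:ℝ)..b, Real.exp (-n*(α*u^(-δ)))) * (1 + (1+δ)*b^δ/(n*α*δ)) := by
  have hC : 0 < n*α*δ := by positivity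
  have hne : ∀ x ∈ Set.uIcc (1:ℝ) b, x ≠ 0 := by
    rw [Set.uIcc_of_le hb]
    intro x hx; have := hx.1; positivity
  have hftc : (∫ u in (1:ℝ)..b, Real.exp (-n*(α*u^(-δ))) * (1 + (1+δ)*u^δ/(n*α*δ)))
      = b ^ (1+δ)/(n*α*δ) * Real.exp (-n*α*b^(-δ)) - 1/(n*α*δ) * Real.exp (-n*α) := by
    have := intervalIntegral.integral_eq_sub_of_hasDerivAt
      (f := fun u : ℝ => u ^ (1+δ) / (n*α*δ) * Real.exp (-n*α*u^(-δ)))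
      (f' := fun u : ℝ => Real.exp (-n*(α*u^(-δ))) * (1 + (1+δ)*u^δ/(n*α*δ)))
      (a := 1) (b := b)
      (fun u hu => by
        refine aux_deriv α δ n hα hδ hn u ?_
        rw [Set.uIcc_of_le hb] at hu
        linarith [hu.1])
      ((aux_contOn α δ n (1+δ) 1 _ hne).intervalIntegrable)
    rw [this]
    simp only [Real.one_rpow]
    ring_nf
  have hg_int : IntervalIntegrable (fun u : ℝ => Real.exp (-n*(α*u^(-δ)))) MeasureTheory.volume 1 b := by
    have := (aux_contOn α δ n 0 1 _ hne).intervalIntegrable (μ := MeasureTheory.volume)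
    simpa using this
  have hgc_int : IntervalIntegrable
      (fun u : ℝ => Real.exp (-n*(α*u^(-δ))) * (1 + (1+δ)*u^δ/(n*α*δ))) MeasureTheory.volume 1 b :=
    (aux_contOn α δ n (1+δ) 1 _ hne).intervalIntegrable
  -- lower: g ≤ g * (1 + stuff)
  have mono1 : (∫ u in (1:ℝ)..b, Real.exp (-n*(α*u^(-δ))))
      ≤ ∫ u in (1:ℝ)..b, Real.exp (-n*(α*u^(-δ))) * (1 + (1+δ)*u^δ/(n*α*δ)) := by
    apply intervalIntegral.integral_mono_on hb hg_int hgc_int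
    intro u hu
    have hu0 : (0:ℝ) < u := lt_of_lt_of_le one_pos hu.1
    have h1 : 0 ≤ (1+δ)*u^δ/(n*α*δ) := by positivity
    nlinarith [Real.exp_pos (-n*(α*u^(-δ)))]
  have mono2 : (∫ u in (1:ℝ)..b, Real.exp (-n*(α*u^(-δ))) * (1 + (1+δ)*u^δ/(n*α*δ)))
      ≤ (∫ u in (1:ℝ)..b, Real.exp (-n*(α*u^(-δ)))) * (1 + (1+δ)*b^δ/(n*α*δ)) := by
    rw [← intervalIntegral.integral_mul_const]
    apply intervalIntegral.integral_mono_on hb hgc_int (hg_int.mul_const _)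
    intro u hu
    have hu0 : (0:ℝ) < u := lt_of_lt_of_le one_pos hu.1
    have hub : u ^ δ ≤ b ^ δ := Real.rpow_le_rpow (le_of_lt hu0) hu.2 (by linarith)
    have := Real.exp_pos (-n*(α*u^(-δ)))
    have h2 : (1+δ)*u^δ/(n*α*δ) ≤ (1+δ)*b^δ/(n*α*δ) := by
      apply div_le_div_of_nonneg_right ?_ hC.le
      · nlinarith
    nlinarith [this, h2]
  constructor
  · have hF1 : 0 < 1/(n*α*δ) * Real.exp (-n*α) := by positivity
    linarith [mono1, hftc.le]
  · rw [← hftc]; exact mono2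

/-- For `δ > 1`, `α > 0`, `q(u) = α u^{-δ}` and `k(N) ∼ A (N / log N)^{1/δ}` with
`A > 0`, one has
`∫_1^{k(N)} e^{-N q(u)} du ∼ (1/(αδ)) (k(N)^{1+δ}/N) exp(-α N k(N)^{-δ})` as `N → ∞`. -/
theorem stmt16 (α δ A : ℝ) (hα : 0 < α) (hδ : 1 < δ) (hA : 0 < A)
    (k : ℕ → ℝ)
    (hk : Tendsto (fun N : ℕ => k N / ((N / Real.log N) ^ (1 / δ))) atTop (nhds A)) :
    Tendsto
      (fun N : ℕ =>
        (∫ u in (1 : ℝ)..(k N), Real.exp (-(N : ℝ) * (α * u ^ (-δ)))) /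
          (1 / (α * δ) * (k N ^ (1 + δ) / N) * Real.exp (-α * N * k N ^ (-δ))))
      atTop (nhds 1) := by
  have hδ0 : (0:ℝ) < δ := by linarith
  set t : ℕ → ℝ := fun N => ((N:ℝ) / Real.log N) ^ (1/δ) with ht_def
  have hlogN : Tendsto (fun N : ℕ => Real.log N) atTop atTop :=
    Real.tendsto_log_atTop.comp tendsto_natCast_atTop_atTop
  have hxlog : Tendsto (fun x : ℝ => x / Real.log x) atTop atTop := by
    have h0 : Tendsto (fun x : ℝ => Real.log x / x) atTop (nhds 0) := by
      simpa using Real.isLittleO_log_id_atTop.tendsto_div_nhds_zero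
    have h0' : Tendsto (fun x : ℝ => Real.log x / x) atTop (nhdsWithin 0 (Set.Ioi 0)) := by
      apply tendsto_nhdsWithin_of_tendsto_nhds_of_eventually_within _ h0
      filter_upwards [eventually_gt_atTop (Real.exp 1)] with x hx
      have hx0 : (0:ℝ) < x := lt_trans (Real.exp_pos 1) hx
      have hlx : 0 < Real.log x := by
        have h := Real.log_lt_log (Real.exp_pos 1) hx
        rw [Real.log_exp] at h
        linarith
      exact div_pos hlx hx0
    have h1 := h0'.inv_tendsto_nhdsGT_zero
    apply h1.congr'
    filter_upwards [eventually_gt_atTop (0:ℝ)] with x hx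
    simp [inv_div]
  have ht : Tendsto t atTop atTop :=
    (tendsto_rpow_atTop (by positivity : (0:ℝ) < 1/δ)).comp
      (hxlog.comp tendsto_natCast_atTop_atTop)
  have hN1 : ∀ᶠ N : ℕ in atTop, (1:ℝ) ≤ (N:ℝ) :=
    tendsto_natCast_atTop_atTop.eventually_ge_atTop 1
  have hlog1 : ∀ᶠ N : ℕ in atTop, (1:ℝ) ≤ Real.log N := hlogN.eventually_ge_atTop 1
  have ht1 : ∀ᶠ N : ℕ in atTop, (1:ℝ) ≤ t N := ht.eventually_ge_atTop 1
  have hr_pos : ∀ᶠ N : ℕ in atTop, A/2 ≤ k N / t N :=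
    hk.eventually (eventually_ge_nhds (by linarith))
  have hk_top : Tendsto k atTop atTop := by
    apply tendsto_atTop_mono' atTop ?_ (ht.const_mul_atTop (half_pos hA))
    filter_upwards [hr_pos, ht1] with N h1 h2
    have htpos : 0 < t N := lt_of_lt_of_le one_pos h2
    have hkN : k N = (k N / t N) * t N := (div_mul_cancel₀ _ (ne_of_gt htpos)).symm
    nlinarith
  have hk2 : ∀ᶠ N in atTop, (2:ℝ) ≤ k N := hk_top.eventually_ge_atTop 2
  have hc : Tendsto (fun N : ℕ => (1+δ)*(k N)^δ/((N:ℝ)*α*δ)) atTop (nhds 0) := by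
    have hrd : Tendsto (fun N : ℕ => (k N / t N) ^ δ) atTop (nhds (A ^ δ)) :=
      hk.rpow_const (Or.inr hδ0.le)
    have hinv : Tendsto (fun N : ℕ => (Real.log N)⁻¹) atTop (nhds 0) :=
      hlogN.inv_tendsto_atTop
    have hmul := (hrd.mul hinv).const_mul ((1+δ)/(α*δ))
    simp only [mul_zero] at hmul
    apply hmul.congr'
    filter_upwards [hN1, hlog1, hr_pos, ht1] with N h1 h2 h3 h4
    have htpos : 0 < t N := lt_of_lt_of_le one_pos h4
    have hlogpos : 0 < Real.log N := lt_of_lt_of_le one_pos h2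
    have hNpos : 0 < (N:ℝ) := lt_of_lt_of_le one_pos h1
    have hrnn : 0 ≤ k N / t N := le_trans (by positivity) h3
    have hkN : k N = (k N / t N) * t N := (div_mul_cancel₀ _ (ne_of_gt htpos)).symm
    have hkpow : (k N)^δ = (k N / t N)^δ * (t N)^δ := by
      rw [hkN, Real.mul_rpow hrnn htpos.le]
      rw [← hkN]
    have htpow : (t N)^δ = (N:ℝ)/Real.log N := by
      rw [ht_def]
      dsimp only
      rw [← Real.rpow_mul (by positivity : (0:ℝ) ≤ (N:ℝ)/Real.log N),
        one_div_mul_cancel (ne_of_gt hδ0), Real.rpow_one]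
    rw [hkpow, htpow]
    field_simp
  have hexp : Tendsto (fun N : ℕ => Real.exp (-((N:ℝ)*α)/2)) atTop (nhds 0) := by
    apply (Real.tendsto_exp_atBot.comp ?_)
    have h := (tendsto_natCast_atTop_atTop (R := ℝ)).atTop_mul_const
      (by positivity : (0:ℝ) < α/2)
    have h2 := tendsto_neg_atTop_atBot.comp h
    apply h2.congr
    intro N
    simp only [Function.comp_apply]
    ring
  have hl : Tendsto (fun N : ℕ =>
      (1 - Real.exp (-((N:ℝ)*α)/2)) / (1 + (1+δ)*(k N)^δ/((N:ℝ)*α*δ))) atTop (nhds 1) := by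
    have h := (tendsto_const_nhds (x := (1:ℝ)) (f := atTop (α := ℕ))).sub hexp
    have h2 := (tendsto_const_nhds (x := (1:ℝ)) (f := atTop (α := ℕ))).add hc
    have h3 := h.div h2 (by norm_num)
    simpa [Pi.div_def] using h3
  apply tendsto_of_tendsto_of_tendsto_of_le_of_le' hl tendsto_const_nhds
  · -- lower bound
    filter_upwards [hN1, hk2] with N h1 h2
    have hn : (0:ℝ) < (N:ℝ) := lt_of_lt_of_le one_pos h1
    have hb0 : (0:ℝ) < k N := by linarith
    obtain ⟨hub, hlb⟩ := aux_bounds α δ (N:ℝ) (k N) hα hδ hn (by linarith)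
    have hD : 1/(α*δ)*((k N)^(1+δ)/(N:ℝ))*Real.exp (-α*(N:ℝ)*(k N)^(-δ))
        = (k N)^(1+δ)/((N:ℝ)*α*δ)*Real.exp (-(N:ℝ)*α*(k N)^(-δ)) := by
      rw [show -α*(N:ℝ)*(k N)^(-δ) = -(N:ℝ)*α*(k N)^(-δ) by ring]
      ring
    rw [hD]
    have hFb : (0:ℝ) < (k N)^(1+δ)/((N:ℝ)*α*δ)*Real.exp (-(N:ℝ)*α*(k N)^(-δ)) := by
      have := Real.rpow_pos_of_pos hb0 (1+δ)
      have := Real.exp_pos (-(N:ℝ)*α*(k N)^(-δ))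
      positivity
    have hcnn : (0:ℝ) ≤ (1+δ)*(k N)^δ/((N:ℝ)*α*δ) :=
      div_nonneg (mul_nonneg (by linarith) (Real.rpow_nonneg hb0.le δ)) (by positivity)
    rw [div_le_div_iff₀ (by linarith) hFb]
    -- key : F1 ≤ e * Fb
    have h2δ : (2:ℝ) ≤ (k N) ^ δ := by
      have hb1 : (1:ℝ) ≤ k N := by linarith
      have := Real.rpow_le_rpow_of_exponent_le hb1 hδ.le
      rw [Real.rpow_one] at this
      linarith
    have hbneg : (k N) ^ (-δ) ≤ 1/2 := by
      rw [Real.rpow_neg hb0.le]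
      have hpos : (0:ℝ) < (k N) ^ δ := by linarith
      rw [show (1:ℝ)/2 = (2:ℝ)⁻¹ by norm_num]
      exact inv_anti₀ two_pos h2δ
    have hb1p : (1:ℝ) ≤ (k N) ^ (1+δ) := Real.one_le_rpow (by linarith) (by linarith)
    have hF1e : 1/((N:ℝ)*α*δ) * Real.exp (-(N:ℝ)*α)
        ≤ Real.exp (-((N:ℝ)*α)/2) * ((k N)^(1+δ)/((N:ℝ)*α*δ)*Real.exp (-(N:ℝ)*α*(k N)^(-δ))) := by
      have hee : Real.exp (-(N:ℝ)*α) ≤ Real.exp (-((N:ℝ)*α)/2) * Real.exp (-(N:ℝ)*α*(k N)^(-δ)) := by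
        rw [← Real.exp_add]
        apply Real.exp_le_exp.mpr
        have hmul : (N:ℝ)*α*((k N)^(-δ)) ≤ (N:ℝ)*α*(1/2) :=
          mul_le_mul_of_nonneg_left hbneg (by positivity)
        nlinarith
      have hC : (0:ℝ) < (N:ℝ)*α*δ := by positivity
      calc 1/((N:ℝ)*α*δ) * Real.exp (-(N:ℝ)*α)
          ≤ 1/((N:ℝ)*α*δ) * (Real.exp (-((N:ℝ)*α)/2) * Real.exp (-(N:ℝ)*α*(k N)^(-δ))) := by
            apply mul_le_mul_of_nonneg_left hee (by positivity)
        _ ≤ (k N)^(1+δ)/((N:ℝ)*α*δ) * (Real.exp (-((N:ℝ)*α)/2) * Real.exp (-(N:ℝ)*α*(k N)^(-δ))) := by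
            apply mul_le_mul_of_nonneg_right _ (by positivity)
            rw [div_le_div_iff₀ hC hC] at *
            nlinarith
        _ = Real.exp (-((N:ℝ)*α)/2) * ((k N)^(1+δ)/((N:ℝ)*α*δ)*Real.exp (-(N:ℝ)*α*(k N)^(-δ))) := by
            ring
    nlinarith [hlb, hF1e, hFb, Real.exp_pos (-((N:ℝ)*α)/2)]
  · -- upper bound
    filter_upwards [hN1, hk2] with N h1 h2
    have hn : (0:ℝ) < (N:ℝ) := lt_of_lt_of_le one_pos h1
    have hb0 : (0:ℝ) < k N := by linarith
    obtain ⟨hub, _⟩ := aux_bounds α δ (N:ℝ) (k N) hα hδ hn (by linarith)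
    have hD : 1/(α*δ)*((k N)^(1+δ)/(N:ℝ))*Real.exp (-α*(N:ℝ)*(k N)^(-δ))
        = (k N)^(1+δ)/((N:ℝ)*α*δ)*Real.exp (-(N:ℝ)*α*(k N)^(-δ)) := by
      rw [show -α*(N:ℝ)*(k N)^(-δ) = -(N:ℝ)*α*(k N)^(-δ) by ring]
      ring
    rw [hD]
    have hFb : (0:ℝ) < (k N)^(1+δ)/((N:ℝ)*α*δ)*Real.exp (-(N:ℝ)*α*(k N)^(-δ)) := by
      have := Real.rpow_pos_of_pos hb0 (1+δ)
      have := Real.exp_pos (-(N:ℝ)*α*(k N)^(-δ))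
      positivity
    exact (div_le_one hFb).mpr hub
end
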